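/- arXiv:1907.03166 — 2 statements merged into one kernel-verified Lean document; each statement's English description precedes it below -/
import Mathlib

section
/- Let D be a simple digraph and G = G(D) its associated bipartite graph with the canonical perfect matching M_D. Every circuit C of even length in G such that a collection of alternating edges of C forms a subset of M_D is in fact a cycle (i.e., the vertices of C are pairwise distinct). -/
/-- The bipartite graph `G(D)` associated to a digraph `D` on `m` vertices with
edge relation `A`: vertices `x_i = Sum.inl i` and `y_i = Sum.inr i`, edges
`{x_i, y_i}` for all `i`, and `{x_i, y_j}` whenever `z_i → z_j` in `D`. -/
def digraphBip (m : ℕ) (A : Fin m → Fin m → Prop) : SimpleGraph (Fin m ⊕ Fin m) where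
  Adj u w := ∃ i j, (i = j ∨ A i j) ∧
    ((u = Sum.inl i ∧ w = Sum.inr j) ∨ (u = Sum.inr j ∧ w = Sum.inl i))
  symm := by
    constructor
    rintro u w ⟨i, j, hij, h | h⟩
    · exact ⟨i, j, hij, Or.inr ⟨h.2, h.1⟩⟩
    · exact ⟨i, j, hij, Or.inl ⟨h.2, h.1⟩⟩
  loopless := by
    constructor
    rintro u ⟨i, j, hij, ⟨h1, h2⟩ | ⟨h1, h2⟩⟩ <;> subst h1 <;> simp at h2

/-- The canonical matching `M_D = {{x_i, y_i} : i}` of `G(D)`, as a subgraph. -/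
def matchingSub (m : ℕ) (A : Fin m → Fin m → Prop) : (digraphBip m A).Subgraph where
  verts := Set.univ
  Adj u w := ∃ i, (u = Sum.inl i ∧ w = Sum.inr i) ∨ (u = Sum.inr i ∧ w = Sum.inl i)
  adj_sub := by rintro u w ⟨i, h⟩; exact ⟨i, i, Or.inl rfl, h⟩
  edge_vert := by intro u w _; trivial
  symm := by
    constructor
    rintro u w ⟨i, h | h⟩
    exacts [⟨i, Or.inr ⟨h.2, h.1⟩⟩, ⟨i, Or.inl ⟨h.2, h.1⟩⟩]



/-- Index of a vertex of `G(D)`. -/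
def sidx {m : ℕ} : Fin m ⊕ Fin m → Fin m := Sum.elim id id

/-- Every circuit of even length `2t` in `G(D)` (a closed walk with
pairwise distinct edges) such that a collection of alternating edges (either all the
even-position edges or all the odd-position edges) lies in the matching `M_D`
is in fact a cycle: its vertices are pairwise distinct. -/
theorem stmt10 (m t : ℕ) (ht : 1 ≤ t) (A : Fin m → Fin m → Prop) (hA : ∀ i, ¬ A i i)
    (w : ℕ → Fin m ⊕ Fin m) (hclosed : w (2 * t) = w 0)
    (hadj : ∀ k < 2 * t, (digraphBip m A).Adj (w k) (w (k + 1)))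
    (hedges : ∀ k₁ < 2 * t, ∀ k₂ < 2 * t,
      Sym2.mk (w k₁, w (k₁ + 1)) = Sym2.mk (w k₂, w (k₂ + 1)) → k₁ = k₂)
    (halt : (∀ k < 2 * t, k % 2 = 0 → (matchingSub m A).Adj (w k) (w (k + 1))) ∨
            (∀ k < 2 * t, k % 2 = 1 → (matchingSub m A).Adj (w k) (w (k + 1)))) :
    ∀ k₁ < 2 * t, ∀ k₂ < 2 * t, w k₁ = w k₂ → k₁ = k₂ := by
  have idx2 : ∀ u v, (matchingSub m A).Adj u v → sidx v = sidx u ∧ v.isLeft = !u.isLeft := by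
    rintro u v ⟨i, ⟨hu, hv⟩ | ⟨hu, hv⟩⟩ <;> subst hu <;> subst hv <;> simp [sidx]
  have hdet : ∀ u v : Fin m ⊕ Fin m, u.isLeft = v.isLeft → sidx u = sidx v → u = v := by
    rintro (u|u) (v|v) h1 h2 <;> simp_all [sidx]
  have hstep : ∀ k < 2 * t, (w (k+1)).isLeft = !(w k).isLeft := by
    intro k hk
    obtain ⟨i, j, _, ⟨h1, h2⟩ | ⟨h1, h2⟩⟩ := hadj k hk <;> rw [h1, h2] <;> rfl
  have hpar : ∀ k ≤ 2 * t, (w k).isLeft = if k % 2 = 0 then (w 0).isLeft else !(w 0).isLeft := by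
    intro k
    induction k with
    | zero => intro _; simp
    | succ k ih =>
      intro hk
      rw [hstep k (by omega), ih (by omega)]
      rcases Nat.mod_two_eq_zero_or_one k with h | h
      · have h' : (k+1) % 2 = 1 := by omega
        simp [h, h']
      · have h' : (k+1) % 2 = 0 := by omega
        simp [h, h']
  obtain ⟨c, hc2, hc⟩ : ∃ c, c < 2 ∧
      ∀ k < 2 * t, k % 2 = c → (matchingSub m A).Adj (w k) (w (k + 1)) := by
    rcases halt with h | h
    exacts [⟨0, by omega, h⟩, ⟨1, by omega, h⟩]
  have E : ∀ (k a : ℕ), (matchingSub m A).Adj (w a) (w (a+1)) →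
      (w a = w k ∨ w (a+1) = w k) → sidx (w a) = sidx (w k) := by
    intro k a ha hinc
    obtain ⟨h1, h2⟩ := idx2 _ _ ha
    rcases hinc with h | h
    · rw [h]
    · rw [← h, h1]
  have pick : ∀ k, k < 2*t → ∃ a, a < 2*t ∧ a % 2 = c ∧ (matchingSub m A).Adj (w a) (w (a+1)) ∧
      (w a = w k ∨ w (a+1) = w k) ∧ (a = k ∨ a + 1 = k ∨ (k = 0 ∧ a + 1 = 2*t)) := by
    intro k hk
    by_cases hp : k % 2 = c
    · exact ⟨k, hk, hp, hc k hk hp, Or.inl rfl, Or.inl rfl⟩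
    · rcases Nat.eq_zero_or_pos k with rfl | hpos
      · refine ⟨2*t - 1, by omega, by omega, hc _ (by omega) (by omega), ?_, ?_⟩
        · right
          have h21 : 2*t - 1 + 1 = 2*t := by omega
          rw [h21, hclosed]
        · right; right; exact ⟨rfl, by omega⟩
      · have hk1 : k - 1 + 1 = k := by omega
        refine ⟨k - 1, by omega, by omega, hc (k-1) (by omega) (by omega), ?_, by right; left; omega⟩
        right; rw [hk1]
  intro k₁ hk₁ k₂ hk₂ hw
  obtain ⟨a₁, ha₁lt, ha₁p, ha₁m, ha₁i, ha₁r⟩ := pick k₁ hk₁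
  obtain ⟨a₂, ha₂lt, ha₂p, ha₂m, ha₂i, ha₂r⟩ := pick k₂ hk₂
  have hL : (w a₁).isLeft = (w a₂).isLeft := by
    rw [hpar a₁ (by omega), hpar a₂ (by omega), ha₁p, ha₂p]
  have h0 : w a₁ = w a₂ := hdet _ _ hL (by rw [E k₁ a₁ ha₁m ha₁i, E k₂ a₂ ha₂m ha₂i, hw])
  have h1 : w (a₁+1) = w (a₂+1) := hdet _ _
    (by rw [(idx2 _ _ ha₁m).2, (idx2 _ _ ha₂m).2, hL])
    (by rw [(idx2 _ _ ha₁m).1, (idx2 _ _ ha₂m).1, h0])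
  have heq : Sym2.mk (w a₁, w (a₁+1)) = Sym2.mk (w a₂, w (a₂+1)) := by
    rw [h0, h1]
  have haa : a₁ = a₂ := hedges a₁ ha₁lt a₂ ha₂lt heq
  subst haa
  have hne : w a₁ ≠ w (a₁+1) := (hadj a₁ ha₁lt).ne
  rcases ha₁r with h1 | h1 | ⟨h1, h1'⟩ <;> rcases ha₂r with h2 | h2 | ⟨h2, h2'⟩
  · omega
  · exact absurd ((congrArg w h1).trans (hw.trans (congrArg w h2.symm))) hne
  · exact absurd ((congrArg w h1).trans (hw.trans ((congrArg w h2).trans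
      (hclosed.symm.trans (congrArg w h2'.symm))))) hne
  · exact absurd ((congrArg w h2).trans (hw.symm.trans (congrArg w h1.symm))) hne
  · omega
  · omega
  · exact absurd ((congrArg w h2).trans (hw.symm.trans ((congrArg w h1).trans
      (hclosed.symm.trans (congrArg w h1'.symm))))) hne
  · omega
  · omega
end

section
/- Let M be a t×t matrix with entries in {0} ∪ {±T_1, ..., ±T_r} (where T_1,...,T_r are distinct indeterminates) such that det(M) is a binomial whose two monomials are squarefree and relatively prime. If every column of M has at most two nonzero entries, then every column of M has exactly two nonzero entries, every row of M has exactly two nonzero entries, and all 2t nonzero entries of M involve pairwise distinct variables. -/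
open MvPolynomial

/-- The ring hom sending `X v ↦ 0` and fixing all other variables. -/
noncomputable def stmt12phi {r : ℕ} (v : Fin r) :
    MvPolynomial (Fin r) ℚ →+* MvPolynomial (Fin r) ℚ :=
  (aeval (fun w : Fin r => if w = v then 0 else X w)).toRingHom

lemma stmt12phi_X {r : ℕ} (v w : Fin r) :
    stmt12phi v (X w) = if w = v then 0 else X w := by
  simp [stmt12phi]

lemma stmt12phi_monomial {r : ℕ} (v : Fin r) (d : Fin r →₀ ℕ) (c : ℚ) :
    stmt12phi v (monomial d c) = if d v = 0 then monomial d c else 0 := by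
  classical
  rw [stmt12phi, AlgHom.toRingHom_eq_coe, RingHom.coe_coe, aeval_monomial]
  by_cases h : d v = 0
  · rw [if_pos h]
    have hprod : (d.prod fun n e => (if n = v then 0 else X n : MvPolynomial (Fin r) ℚ) ^ e)
        = d.prod fun n e => (X n : MvPolynomial (Fin r) ℚ) ^ e := by
      apply Finsupp.prod_congr
      intro w hw
      have : w ≠ v := by
        rintro rfl
        exact (Finsupp.mem_support_iff.mp hw) h
      rw [if_neg this]
    rw [hprod, algebraMap_eq, ← monomial_eq]
  · rw [if_neg h]
    have hv : v ∈ d.support := Finsupp.mem_support_iff.mpr h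
    rw [Finsupp.prod]
    rw [Finset.prod_eq_zero hv (by rw [if_pos rfl]; exact zero_pow h)]
    rw [mul_zero]

lemma stmt12_var_unique {r : ℕ} {l l' : Fin r} {p : MvPolynomial (Fin r) ℚ}
    (h : p = X l ∨ p = -X l) (h' : p = X l' ∨ p = -X l') : l = l' := by
  classical
  by_contra hne
  have hs : Finsupp.single l 1 ≠ Finsupp.single l' 1 := by
    intro hc
    exact hne (Finsupp.single_left_injective one_ne_zero hc)
  have h1 : coeff (Finsupp.single l 1) p = 1 ∨ coeff (Finsupp.single l 1) p = -1 := by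
    rcases h with h | h <;> rw [h]
    · left; simp [coeff_X']
    · right; simp [coeff_X']
  have h0 : coeff (Finsupp.single l 1) p = 0 := by
    rcases h' with h' | h' <;> rw [h'] <;>
      simp [coeff_X', Ne.symm hs]
  rcases h1 with h1 | h1 <;> rw [h0] at h1 <;> norm_num at h1

/-- Let `M` be a t×t matrix whose entries are `0` or `±T_l` for
distinct indeterminates `T_1, ..., T_r`, such that `det M` is a binomial whose two
monomials are squarefree and relatively prime, and every column of `M` has at most
two nonzero entries. Then every column has exactly two nonzero entries, every row
has exactly two nonzero entries, and the `2t` nonzero entries involve pairwise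
distinct variables. -/
theorem stmt12 {t r : ℕ} (M : Matrix (Fin t) (Fin t) (MvPolynomial (Fin r) ℚ))
    (hent : ∀ i j, M i j = 0 ∨ ∃ l, M i j = X l ∨ M i j = -X l)
    (hdet : ∃ (d₁ d₂ : Fin r →₀ ℕ) (c₁ c₂ : ℚ), c₁ ≠ 0 ∧ c₂ ≠ 0 ∧ d₁ ≠ d₂ ∧
      (∀ v, d₁ v ≤ 1) ∧ (∀ v, d₂ v ≤ 1) ∧ (∀ v, d₁ v = 0 ∨ d₂ v = 0) ∧
      M.det = monomial d₁ c₁ + monomial d₂ c₂)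
    (hcol : ∀ j, Nat.card {i : Fin t // M i j ≠ 0} ≤ 2) :
    (∀ j, Nat.card {i : Fin t // M i j ≠ 0} = 2) ∧
    (∀ i, Nat.card {j : Fin t // M i j ≠ 0} = 2) ∧
    (∀ (i₁ j₁ i₂ j₂ : Fin t) (l : Fin r), (i₁, j₁) ≠ (i₂, j₂) →
      (M i₁ j₁ = X l ∨ M i₁ j₁ = -X l) → ¬(M i₂ j₂ = X l ∨ M i₂ j₂ = -X l)) := by
  classical
  obtain ⟨d₁, d₂, c₁, c₂, hc₁, hc₂, hd12, hsf₁, hsf₂, hcop, hdet⟩ := hdet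
  -- nonzero entries are nonzero
  have hXne : ∀ (i j : Fin t) (l : Fin r), (M i j = X l ∨ M i j = -X l) → M i j ≠ 0 := by
    rintro i j l (h | h) <;> rw [h]
    · exact X_ne_zero l
    · intro hc
      exact X_ne_zero (R := ℚ) l (neg_eq_zero.mp hc)
  -- coefficients of det
  have hcoeff₁ : coeff d₁ M.det = c₁ := by
    rw [hdet, coeff_add, coeff_monomial, coeff_monomial, if_pos rfl, if_neg (Ne.symm hd12),
      add_zero]
  have hcoeff₂ : coeff d₂ M.det = c₂ := by
    rw [hdet, coeff_add, coeff_monomial, coeff_monomial, if_pos rfl, if_neg hd12, zero_add]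
  have hdetne : M.det ≠ 0 := fun h => hc₁ (by rw [← hcoeff₁, h, coeff_zero])
  -- applying stmt12phi to det is never zero
  have hphidet : ∀ v : Fin r, stmt12phi v M.det ≠ 0 := by
    intro v h
    rw [hdet, map_add, stmt12phi_monomial, stmt12phi_monomial] at h
    rcases hcop v with hv | hv
    · rw [if_pos hv] at h
      apply hc₁
      have := congrArg (coeff d₁) h
      rw [coeff_add, coeff_monomial, if_pos rfl, coeff_zero] at this
      rw [← this]
      have : coeff d₁ (if d₂ v = 0 then (monomial d₂) c₂ else 0) = 0 := by
        split
        · rw [coeff_monomial, if_neg (Ne.symm hd12)]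
        · exact coeff_zero _
      rw [this, add_zero]
    · rw [if_pos hv] at h
      apply hc₂
      have := congrArg (coeff d₂) h
      rw [coeff_add, coeff_monomial, if_pos rfl, coeff_zero] at this
      rw [← this]
      have : coeff d₂ (if d₁ v = 0 then (monomial d₁) c₁ else 0) = 0 := by
        split
        · rw [coeff_monomial, if_neg hd12]
        · exact coeff_zero _
      rw [this, zero_add]
  -- Step A: every variable of d₁ or d₂ appears in some entry
  have happears : ∀ v : Fin r, (d₁ v ≠ 0 ∨ d₂ v ≠ 0) →
      ∃ i j, M i j = X v ∨ M i j = -X v := by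
    intro v hv
    by_contra hnot
    push_neg at hnot
    have hmap : M.map (stmt12phi v) = M := by
      ext i j
      rcases hent i j with h | ⟨l, hl⟩
      · simp [Matrix.map_apply, h]
      · have hlv : l ≠ v := by
          rintro rfl
          rcases hl with hl | hl
          · exact (hnot i j).1 hl
          · exact (hnot i j).2 hl
        rcases hl with hl | hl <;>
          simp [Matrix.map_apply, hl, stmt12phi_X, hlv]
    have hfix : stmt12phi v M.det = M.det := by
      rw [RingHom.map_det, RingHom.mapMatrix_apply, hmap]
    rw [hdet, map_add, stmt12phi_monomial, stmt12phi_monomial] at hfix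
    rcases hv with hv | hv
    · have hv2 : d₂ v = 0 := (hcop v).resolve_left hv
      rw [if_neg hv, if_pos hv2, zero_add] at hfix
      have := congrArg (coeff d₁) hfix
      rw [coeff_monomial, if_neg (Ne.symm hd12), coeff_add, coeff_monomial, if_pos rfl,
        coeff_monomial, if_neg (Ne.symm hd12), add_zero] at this
      exact hc₁ this.symm
    · have hv1 : d₁ v = 0 := (hcop v).resolve_right hv
      rw [if_pos hv1, if_neg hv, add_zero] at hfix
      have := congrArg (coeff d₂) hfix
      rw [coeff_monomial, if_neg hd12, coeff_add, coeff_monomial, if_neg hd12,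
        coeff_monomial, if_pos rfl, zero_add] at this
      exact hc₂ this.symm
  -- Step B: det is homogeneous of degree t
  have hhom : M.det.IsHomogeneous t := by
    rw [Matrix.det_apply']
    apply MvPolynomial.IsHomogeneous.sum
    intro σ _
    have hprodhom : IsHomogeneous (∏ i, M (σ i) i) t := by
      have := MvPolynomial.IsHomogeneous.prod Finset.univ (fun i => M (σ i) i)
        (fun _ => (1 : ℕ)) (fun i _ => by
          show (M (σ i) i).IsHomogeneous 1
          rcases hent (σ i) i with h | ⟨l, hl | hl⟩
          · rw [h]; exact isHomogeneous_zero _ _ _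
          · rw [hl]; exact isHomogeneous_X _ _
          · rw [hl]
            exact (homogeneousSubmodule (Fin r) ℚ 1).neg_mem (isHomogeneous_X _ _))
      simpa using this
    have hcast : ((Equiv.Perm.sign σ : ℤ) : MvPolynomial (Fin r) ℚ)
        = C ((Equiv.Perm.sign σ : ℤ) : ℚ) := (map_intCast (C : ℚ →+* _) _).symm
    rw [hcast]
    simpa using (isHomogeneous_C (Fin r) ((Equiv.Perm.sign σ : ℤ) : ℚ)).mul hprodhom
  -- degrees and support cards
  have hdeg : ∀ (d : Fin r →₀ ℕ), coeff d M.det ≠ 0 → (∀ v, d v ≤ 1) → d.support.card = t := by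
    intro d hcd hsf
    have hw : Finsupp.degree d = t := by
      rw [Finsupp.degree_eq_weight_one]
      exact hhom hcd
    rw [← hw, Finsupp.degree]
    rw [Finset.card_eq_sum_ones]
    apply Finset.sum_congr rfl
    intro v hv
    have h1 : d v ≠ 0 := Finsupp.mem_support_iff.mp hv
    have h2 := hsf v
    omega
  have hcard₁ : d₁.support.card = t := hdeg d₁ (by rw [hcoeff₁]; exact hc₁) hsf₁
  have hcard₂ : d₂.support.card = t := hdeg d₂ (by rw [hcoeff₂]; exact hc₂) hsf₂
  have hdisj : Disjoint d₁.support d₂.support := by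
    rw [Finset.disjoint_left]
    intro v h1 h2
    rcases hcop v with h | h
    · exact Finsupp.mem_support_iff.mp h1 h
    · exact Finsupp.mem_support_iff.mp h2 h
  set S : Finset (Fin r) := d₁.support ∪ d₂.support with hS
  have hScard : S.card = 2 * t := by
    rw [hS, Finset.card_union_of_disjoint hdisj, hcard₁, hcard₂]; ring
  -- positions of nonzero entries
  set P : Finset (Fin t × Fin t) :=
    Finset.univ.filter (fun p : Fin t × Fin t => M p.1 p.2 ≠ 0) with hP
  set V : Fin t × Fin t → ℕ := fun p =>
    if h : ∃ l, M p.1 p.2 = X l ∨ M p.1 p.2 = -X l then (h.choose : Fin r).val else 0 with hV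
  have hVval : ∀ (i j : Fin t) (l : Fin r), (M i j = X l ∨ M i j = -X l) → V (i, j) = l.val := by
    intro i j l h
    have hex : ∃ l', M i j = X l' ∨ M i j = -X l' := ⟨l, h⟩
    rw [hV]
    simp only [dif_pos hex]
    exact congrArg Fin.val (stmt12_var_unique hex.choose_spec h)
  have hSsub : S.image Fin.val ⊆ P.image V := by
    intro n hn
    obtain ⟨v, hv, rfl⟩ := Finset.mem_image.mp hn
    have hv' : d₁ v ≠ 0 ∨ d₂ v ≠ 0 := by
      rcases Finset.mem_union.mp hv with h | h
      · exact Or.inl (Finsupp.mem_support_iff.mp h)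
      · exact Or.inr (Finsupp.mem_support_iff.mp h)
    obtain ⟨i, j, hij⟩ := happears v hv'
    refine Finset.mem_image.mpr ⟨(i, j), ?_, hVval i j v hij⟩
    exact Finset.mem_filter.mpr ⟨Finset.mem_univ _, hXne i j v hij⟩
  -- column and row counts
  have hcolcard : ∀ j, Nat.card {i : Fin t // M i j ≠ 0}
      = (Finset.univ.filter fun i => M i j ≠ 0).card := by
    intro j
    rw [Nat.card_eq_fintype_card, Fintype.card_subtype]
  have hrowcard : ∀ i, Nat.card {j : Fin t // M i j ≠ 0}
      = (Finset.univ.filter fun j => M i j ≠ 0).card := by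
    intro i
    rw [Nat.card_eq_fintype_card, Fintype.card_subtype]
  have hPcol : P.card = ∑ j : Fin t, (Finset.univ.filter fun i => M i j ≠ 0).card := by
    rw [Finset.card_eq_sum_card_fiberwise
      (f := fun p : Fin t × Fin t => p.2) (t := Finset.univ) (fun p _ => Finset.mem_univ _)]
    apply Finset.sum_congr rfl
    intro j _
    have hset : P.filter (fun p => p.2 = j)
        = (Finset.univ.filter fun i => M i j ≠ 0).image (fun i => (i, j)) := by
      ext ⟨a, b⟩
      simp only [hP, Finset.mem_filter, Finset.mem_univ, true_and, Finset.mem_image]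
      constructor
      · rintro ⟨hne, rfl⟩
        exact ⟨a, hne, rfl⟩
      · rintro ⟨i, hi, heq⟩
        cases heq
        exact ⟨hi, rfl⟩
    rw [hset, Finset.card_image_of_injective _ (fun a b h => congrArg Prod.fst h)]
  have hProw : P.card = ∑ i : Fin t, (Finset.univ.filter fun j => M i j ≠ 0).card := by
    rw [Finset.card_eq_sum_card_fiberwise
      (f := fun p : Fin t × Fin t => p.1) (t := Finset.univ) (fun p _ => Finset.mem_univ _)]
    apply Finset.sum_congr rfl
    intro i _
    have hset : P.filter (fun p => p.1 = i)
        = (Finset.univ.filter fun j => M i j ≠ 0).image (fun j => (i, j)) := by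
      ext ⟨a, b⟩
      simp only [hP, Finset.mem_filter, Finset.mem_univ, true_and, Finset.mem_image]
      constructor
      · rintro ⟨hne, rfl⟩
        exact ⟨b, hne, rfl⟩
      · rintro ⟨j, hj, heq⟩
        cases heq
        exact ⟨hj, rfl⟩
    rw [hset, Finset.card_image_of_injective _ (fun a b h => congrArg Prod.snd h)]
  -- the chain of inequalities
  have hPle : P.card ≤ 2 * t := by
    rw [hPcol]
    calc ∑ j : Fin t, (Finset.univ.filter fun i => M i j ≠ 0).card
        ≤ ∑ _j : Fin t, 2 := by
          apply Finset.sum_le_sum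
          intro j _
          rw [← hcolcard j]
          exact hcol j
      _ = 2 * t := by simp [mul_comm]
  have hchain : 2 * t ≤ P.card := by
    calc 2 * t = (S.image Fin.val).card := by
          rw [Finset.card_image_of_injective _ Fin.val_injective, hScard]
      _ ≤ (P.image V).card := Finset.card_le_card hSsub
      _ ≤ P.card := Finset.card_image_le
  have hPcard : P.card = 2 * t := le_antisymm hPle hchain
  have hVinj : Set.InjOn V P := by
    apply Finset.injOn_of_card_image_eq
    have h1 : (P.image V).card ≤ P.card := Finset.card_image_le
    have h2 : 2 * t ≤ (P.image V).card := by
      calc 2 * t = (S.image Fin.val).card := by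
            rw [Finset.card_image_of_injective _ Fin.val_injective, hScard]
        _ ≤ (P.image V).card := Finset.card_le_card hSsub
    omega
  -- columns exactly 2
  have hcol2 : ∀ j, Nat.card {i : Fin t // M i j ≠ 0} = 2 := by
    intro j
    rw [hcolcard]
    have hsum : ∑ j : Fin t, (Finset.univ.filter fun i => M i j ≠ 0).card
        = ∑ _j : Fin t, 2 := by
      rw [← hPcol, hPcard]; simp [mul_comm]
    have := (Finset.sum_eq_sum_iff_of_le (fun j _ => by
      rw [← hcolcard j]; exact hcol j)).mp hsum j (Finset.mem_univ j)
    exact this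
  -- rows ≥ 2
  have hrowge : ∀ i, 2 ≤ (Finset.univ.filter fun j => M i j ≠ 0).card := by
    intro i
    by_contra hlt
    push_neg at hlt
    have hcases : (Finset.univ.filter fun j => M i j ≠ 0).card = 0 ∨
        (Finset.univ.filter fun j => M i j ≠ 0).card = 1 := by omega
    rcases hcases with h | h
    · -- row is zero
      have hzero : ∀ j, M i j = 0 := by
        intro j
        by_contra hj
        have : j ∈ Finset.univ.filter fun j => M i j ≠ 0 :=
          Finset.mem_filter.mpr ⟨Finset.mem_univ _, hj⟩
        rw [Finset.card_eq_zero.mp h] at this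
        exact absurd this (Finset.notMem_empty _)
      exact hdetne (Matrix.det_eq_zero_of_row_eq_zero i hzero)
    · -- exactly one nonzero entry in row i
      obtain ⟨j₀, hj₀⟩ := Finset.card_eq_one.mp h
      have hmem : ∀ j, M i j ≠ 0 → j = j₀ := by
        intro j hj
        have : j ∈ Finset.univ.filter fun j => M i j ≠ 0 :=
          Finset.mem_filter.mpr ⟨Finset.mem_univ _, hj⟩
        rw [hj₀] at this
        exact Finset.mem_singleton.mp this
      have hne0 : M i j₀ ≠ 0 := by
        have : j₀ ∈ Finset.univ.filter fun j => M i j ≠ 0 := by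
          rw [hj₀]; exact Finset.mem_singleton_self _
        exact (Finset.mem_filter.mp this).2
      obtain ⟨l, hl⟩ := (hent i j₀).resolve_left hne0
      have hrowzero : ∀ j, (M.map (stmt12phi l)) i j = 0 := by
        intro j
        by_cases hj : j = j₀
        · subst hj
          rcases hl with hl | hl <;>
            simp [Matrix.map_apply, hl, stmt12phi_X]
        · have : M i j = 0 := by
            by_contra hc
            exact hj (hmem j hc)
          simp [Matrix.map_apply, this]
      have : stmt12phi l M.det = 0 := by
        rw [RingHom.map_det, RingHom.mapMatrix_apply]
        exact Matrix.det_eq_zero_of_row_eq_zero i hrowzero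
      exact hphidet l this
  -- rows exactly 2
  have hrow2 : ∀ i, Nat.card {j : Fin t // M i j ≠ 0} = 2 := by
    intro i
    rw [hrowcard]
    have hsum : ∑ _i : Fin t, 2
        = ∑ i : Fin t, (Finset.univ.filter fun j => M i j ≠ 0).card := by
      rw [← hProw, hPcard]; simp [mul_comm]
    have := (Finset.sum_eq_sum_iff_of_le (fun i _ => hrowge i)).mp hsum i (Finset.mem_univ i)
    exact this.symm
  refine ⟨hcol2, hrow2, ?_⟩
  -- distinct variables
  intro i₁ j₁ i₂ j₂ l hpne h1 h2
  have hm1 : (i₁, j₁) ∈ P := Finset.mem_filter.mpr ⟨Finset.mem_univ _, hXne i₁ j₁ l h1⟩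
  have hm2 : (i₂, j₂) ∈ P := Finset.mem_filter.mpr ⟨Finset.mem_univ _, hXne i₂ j₂ l h2⟩
  have hv1 : V (i₁, j₁) = l.val := hVval i₁ j₁ l h1
  have hv2 : V (i₂, j₂) = l.val := hVval i₂ j₂ l h2
  exact hpne (hVinj hm1 hm2 (hv1.trans hv2.symm))
end
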